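/- Every rational polyhedral cone C = {x ∈ ℝⁿ : Ax ≥ 0}, where A is a matrix with rational entries, admits an integral Hilbert basis: there exist finitely many vectors a₁,...,a_q ∈ C ∩ ℤⁿ such that every v ∈ C ∩ ℤⁿ is a nonnegative integer combination v = Σ_k m_k a_k with m_k ∈ ℕ. -/

import Mathlib

/-- Gordan's lemma / integral Hilbert bases: the lattice points of a rational polyhedral cone
`{x : Ax ≥ 0}` are generated, as nonnegative integer combinations, by finitely many of them. -/
theorem rational_polyhedral_cone_has_integral_Hilbert_basis
    (m n : ℕ) (A : Matrix (Fin m) (Fin n) ℚ) :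
    ∃ (q : ℕ) (a : Fin q → (Fin n → ℤ)),
      (∀ k : Fin q, ∀ i : Fin m, 0 ≤ ∑ j, (A i j : ℝ) * (a k j : ℝ)) ∧
      ∀ v : Fin n → ℤ, (∀ i : Fin m, 0 ≤ ∑ j, (A i j : ℝ) * (v j : ℝ)) →
        ∃ c : Fin q → ℕ, v = ∑ k, c k • a k := by
  classical
  -- an integer matrix B with the same sign behaviour: B i j = A i j * d with d > 0
  set d : ℤ := ∏ i, ∏ j, ((A i j).den : ℤ) with hd
  have hdpos : 0 < d := Finset.prod_pos fun i _ => Finset.prod_pos fun j _ => by positivity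
  have hden : ∀ i j, ((A i j).den : ℤ) ∣ d := fun i j =>
    dvd_trans (Finset.dvd_prod_of_mem (fun j => ((A i j).den : ℤ)) (Finset.mem_univ j))
      (Finset.dvd_prod_of_mem (fun i => ∏ j, ((A i j).den : ℤ)) (Finset.mem_univ i))
  set B : Fin m → Fin n → ℤ := fun i j => (A i j).num * (d / ((A i j).den : ℤ)) with hBdef
  have hB : ∀ i j, (B i j : ℚ) = A i j * d := by
    intro i j
    obtain ⟨e, he⟩ := hden i j
    have hden0 : ((A i j).den : ℤ) ≠ 0 := by exact_mod_cast (A i j).den_nz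
    have : B i j = (A i j).num * e := by
      rw [hBdef]; simp only []
      rw [he, Int.mul_ediv_cancel_left _ hden0]
    rw [this, he]
    push_cast
    rw [← mul_assoc, Rat.mul_den_eq_num]
  -- the cone condition, over ℤ
  have key : ∀ (v : Fin n → ℤ) (i), (0 ≤ ∑ j, (A i j : ℝ) * (v j : ℝ)) ↔ 0 ≤ ∑ j, B i j * v j := by
    intro v i
    have h1 : ((∑ j, B i j * v j : ℤ) : ℚ) = d * ∑ j, A i j * (v j : ℚ) := by
      push_cast
      rw [Finset.mul_sum]
      refine Finset.sum_congr rfl fun j _ => ?_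
      rw [hB i j]; ring
    have h2 : (0 ≤ ∑ j, (A i j : ℝ) * (v j : ℝ)) ↔ 0 ≤ ∑ j, A i j * (v j : ℚ) := by
      rw [show (∑ j, (A i j : ℝ) * (v j : ℝ)) = ((∑ j, A i j * (v j : ℚ) : ℚ) : ℝ) by
        push_cast; ring]
      exact_mod_cast Iff.rfl
    rw [h2]
    constructor
    · intro h
      have : (0:ℚ) ≤ ((∑ j, B i j * v j : ℤ) : ℚ) := by
        rw [h1]; exact mul_nonneg (by exact_mod_cast hdpos.le) h
      exact_mod_cast this
    · intro h
      have h' : (0:ℚ) ≤ ((∑ j, B i j * v j : ℤ) : ℚ) := by exact_mod_cast h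
      rw [h1] at h'
      have hd' : (0:ℚ) < (d:ℚ) := by exact_mod_cast hdpos
      exact nonneg_of_mul_nonneg_right (by linarith [h']) hd'
  -- the cone predicate over ℤ
  set S : (Fin n → ℤ) → Prop := fun v => ∀ i, 0 ≤ ∑ j, B i j * v j with hS
  set φ : (Fin n → ℤ) → (Fin n ⊕ Fin n ⊕ Fin m → ℕ) := fun v =>
    Sum.elim (fun j => (v j).toNat)
      (Sum.elim (fun j => (-v j).toNat) (fun i => (∑ j, B i j * v j).toNat)) with hφ
  have hsub : ∀ u v, S u → S v → φ u ≤ φ v →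
      S (v - u) ∧ ∀ j, (v j - u j).natAbs + (u j).natAbs = (v j).natAbs := by
    intro u v hu hv hle
    constructor
    · intro i
      have h1 := hle (Sum.inr (Sum.inr i))
      simp only [hφ, Sum.elim_inr] at h1
      have hui := hu i; have hvi := hv i
      have hsplit : ∑ j, B i j * (v - u) j = (∑ j, B i j * v j) - ∑ j, B i j * u j := by
        rw [← Finset.sum_sub_distrib]
        refine Finset.sum_congr rfl fun j _ => ?_
        simp only [Pi.sub_apply]; ring
      rw [hsplit]; omega
    · intro j
      have h1 := hle (Sum.inl j)
      have h2 := hle (Sum.inr (Sum.inl j))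
      simp only [hφ, Sum.elim_inl, Sum.elim_inr] at h1 h2
      omega
  set M : Set (Fin n → ℤ) := {v | (S v ∧ v ≠ 0) ∧ ∀ u, S u → u ≠ 0 → φ u ≤ φ v → u = v}
    with hM
  have hinj : Set.InjOn φ M := by
    intro u _ v _ h
    funext j
    have h1 := congrFun h (Sum.inl j)
    have h2 := congrFun h (Sum.inr (Sum.inl j))
    simp only [hφ, Sum.elim_inl, Sum.elim_inr] at h1 h2
    omega
  have hanti : IsAntichain (· ≤ ·) (φ '' M) := by
    rintro _ ⟨u, hu, rfl⟩ _ ⟨v, hv, rfl⟩ hne hle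
    exact hne (congrArg φ (hv.2 u hu.1.1 hu.1.2 hle))
  have hMfin : M.Finite :=
    Set.Finite.of_finite_image
      (hanti.finite_of_partiallyWellOrderedOn (Set.isPWO_of_wellQuasiOrderedLE (φ '' M))) hinj
  have hmin : ∀ v, S v → v ≠ 0 → ∃ u ∈ M, φ u ≤ φ v := by
    intro v hv hv0
    set T : Set (Fin n → ℤ) := {w | S w ∧ w ≠ 0 ∧ φ w ≤ φ v} with hT
    have hTne : T.Nonempty := ⟨v, hv, hv0, le_rfl⟩
    obtain ⟨u, huT, humin⟩ :=
      (InvImage.wf (fun w : Fin n → ℤ => ∑ j, (w j).natAbs) Nat.lt_wfRel.wf).has_min T hTne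
    refine ⟨u, ⟨⟨huT.1, huT.2.1⟩, ?_⟩, huT.2.2⟩
    intro w hw hw0 hle
    have habs := (hsub w u hw huT.1 hle).2
    have hwT : w ∈ T := ⟨hw, hw0, le_trans hle huT.2.2⟩
    have hge : ∑ j, (u j).natAbs ≤ ∑ j, (w j).natAbs := not_lt.mp (humin w hwT)
    have hle' : ∀ j ∈ Finset.univ, (w j).natAbs ≤ (u j).natAbs := fun j _ => by
      have := habs j; omega
    have hsum : (∑ j, (w j).natAbs) = ∑ j, (u j).natAbs :=
      le_antisymm (Finset.sum_le_sum hle') hge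
    have heq : ∀ j ∈ Finset.univ, (w j).natAbs = (u j).natAbs :=
      (Finset.sum_eq_sum_iff_of_le hle').mp hsum
    funext j
    have h1 := hle (Sum.inl j)
    have h2 := hle (Sum.inr (Sum.inl j))
    simp only [hφ, Sum.elim_inl, Sum.elim_inr] at h1 h2
    have := heq j (Finset.mem_univ j)
    omega
  set F := hMfin.toFinset with hF
  set Q := F.card with hQ
  set e : {x // x ∈ F} ≃ Fin Q := F.equivFin with he
  set a : Fin Q → (Fin n → ℤ) := fun k => ((e.symm k : {x // x ∈ F}) : Fin n → ℤ) with ha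
  have haM : ∀ k, a k ∈ M := fun k => hMfin.mem_toFinset.mp (e.symm k).2
  have main : ∀ N (v : Fin n → ℤ), S v → (∑ j, (v j).natAbs) ≤ N →
      ∃ c : Fin Q → ℕ, v = ∑ k, c k • a k := by
    intro N
    induction N with
    | zero =>
      intro v _ hN
      have h0 : ∑ j, (v j).natAbs = 0 := Nat.le_zero.mp hN
      have hv0 : v = 0 := funext fun j => by
        have := Finset.sum_eq_zero_iff.mp h0 j (Finset.mem_univ j)
        simp only [Pi.zero_apply]; omega
      exact ⟨0, by simp [hv0]⟩
    | succ N ih =>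
      intro v hv hN
      by_cases hv0 : v = 0
      · exact ⟨0, by simp [hv0]⟩
      · obtain ⟨u, huM, hle⟩ := hmin v hv hv0
        obtain ⟨hSvu, habs⟩ := hsub u v huM.1.1 hv hle
        have hu1 : 1 ≤ ∑ j, (u j).natAbs := by
          rcases Nat.eq_zero_or_pos (∑ j, (u j).natAbs) with h0 | h
          · exact absurd (funext fun j => by
              have := Finset.sum_eq_zero_iff.mp h0 j (Finset.mem_univ j)
              simp only [Pi.zero_apply]; omega : u = (0 : Fin n → ℤ)) huM.1.2
          · exact h
        have hsum : (∑ j, ((v - u) j).natAbs) + ∑ j, (u j).natAbs = ∑ j, (v j).natAbs := by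
          rw [← Finset.sum_add_distrib]
          exact Finset.sum_congr rfl fun j _ => by
            simp only [Pi.sub_apply]; exact habs j
        obtain ⟨c, hc⟩ := ih (v - u) hSvu (by omega)
        have huF : u ∈ F := hMfin.mem_toFinset.mpr huM
        refine ⟨fun k => c k + if k = e ⟨u, huF⟩ then 1 else 0, ?_⟩
        have ha0 : a (e ⟨u, huF⟩) = u := by
          simp [ha]
        have hsplit : ∑ k, (c k + if k = e ⟨u, huF⟩ then 1 else 0) • a k
            = (∑ k, c k • a k) + ∑ k, (if k = e ⟨u, huF⟩ then 1 else 0) • a k := by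
          rw [← Finset.sum_add_distrib]
          exact Finset.sum_congr rfl fun k _ => add_smul _ _ _
        have hone : ∑ k, (if k = e ⟨u, huF⟩ then 1 else 0) • a k = a (e ⟨u, huF⟩) := by
          have h' : ∀ k, (if k = e ⟨u, huF⟩ then 1 else 0) • a k
              = if k = e ⟨u, huF⟩ then a k else 0 := fun k => by split <;> simp
          simp only [h', Finset.sum_ite_eq', Finset.mem_univ, if_true]
        rw [hsplit, ← hc, hone, ha0]
        abel
  refine ⟨Q, a, ?_, ?_⟩
  · intro k i
    exact (key (a k) i).mpr ((haM k).1.1 i)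
  · intro v hv
    exact main (∑ j, (v j).natAbs) v (fun i => (key v i).mp (hv i)) le_rfl
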